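/- For an integer x ≥ 1 let M_x be the x×x integer matrix whose (i,j) entry is 1 if i > j, −1 if i < j, and 0 if i = j. If x is even, there exists W ∈ SL(x, ℤ) such that W M_x Wᵀ is the block diagonal matrix with x/2 consecutive 2×2 diagonal blocks equal to S(1). If x is odd, there exists W ∈ SL(x, ℤ) such that W M_x Wᵀ is the block diagonal matrix with (x−1)/2 consecutive 2×2 diagonal blocks equal to S(1) followed by a 1×1 zero block. -/
import Mathlib

open Matrix


/-- The `x×x` skew-symmetric matrix with `(i,j)` entry `1` if `i > j`, `−1` if `i < j`,
`0` if `i = j`. -/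
def Mmat (x : ℕ) : Matrix (Fin x) (Fin x) ℤ :=
  Matrix.of fun i j => if j < i then 1 else if i < j then -1 else 0

/-- Block diagonal matrix whose `t`-th consecutive `2×2` diagonal block is
`S(d t) = !![0, -d t; d t, 0]`; a leftover final index (when `n` is odd) gives a
`1×1` zero block. -/
def blockS (n : ℕ) (d : ℕ → ℤ) : Matrix (Fin n) (Fin n) ℤ :=
  Matrix.of fun i j =>
    if (i : ℕ) % 2 = 0 ∧ (j : ℕ) = (i : ℕ) + 1 then -d ((i : ℕ) / 2)
    else if (j : ℕ) % 2 = 0 ∧ (i : ℕ) = (j : ℕ) + 1 then d ((j : ℕ) / 2)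
    else 0

def Smat : Matrix (Fin 2) (Fin 2) ℤ := !![0, -1; 1, 0]
def Bmat (n : ℕ) : Matrix (Fin 2) (Fin n) ℤ := Matrix.of fun _ _ => -1
def CmatX (n : ℕ) : Matrix (Fin n) (Fin 2) ℤ := Matrix.of fun _ _ => 1
def Emat (n : ℕ) : Matrix (Fin n) (Fin 2) ℤ := Matrix.of fun _ j => if j = 0 then 1 else -1

lemma hES (n : ℕ) : Emat n * Smat = - CmatX n := by
  ext i j
  fin_cases j <;>
    simp [Matrix.mul_apply, Fin.sum_univ_two, Emat, Smat, CmatX]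

lemma hSE (n : ℕ) : Smat * (Emat n)ᵀ = - Bmat n := by
  ext i j
  fin_cases i <;>
    simp [Matrix.mul_apply, Fin.sum_univ_two, Emat, Smat, Bmat]

lemma hEB (n : ℕ) : Emat n * Bmat n = 0 := by
  ext i j
  simp [Matrix.mul_apply, Fin.sum_univ_two, Emat, Bmat]

lemma key (n : ℕ) : ∃ W : Matrix (Fin n) (Fin n) ℤ, W.det = 1 ∧
    W * Mmat n * W.transpose = blockS n (fun _ => 1) := by
  induction n using Nat.strong_induction_on with
  | _ n ih =>
  match n with
  | 0 => exact ⟨1, by simp, by ext i j; exact i.elim0⟩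
  | 1 => refine ⟨1, by simp, ?_⟩
         ext i j
         fin_cases i <;> fin_cases j <;> simp [Mmat, blockS]
  | (n+2) =>
    obtain ⟨W', hdet, hW⟩ := ih n (by omega)
    set e : Fin (n+2) ≃ Fin 2 ⊕ Fin n :=
      (finCongr (Nat.add_comm n 2)).trans finSumFinEquiv.symm with he
    have hl : ∀ a : Fin 2, ((e.symm (Sum.inl a)) : ℕ) = (a : ℕ) := by
      intro a; simp [he, finSumFinEquiv]
    have hr : ∀ b : Fin n, ((e.symm (Sum.inr b)) : ℕ) = 2 + (b : ℕ) := by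
      intro b; simp [he, finSumFinEquiv]; omega
    -- the matrix Mmat (n+2) in block form
    have hM : Matrix.reindex e e (Mmat (n+2)) =
        fromBlocks Smat (Bmat n) (CmatX n) (Mmat n) := by
      ext i j
      rcases i with a | a <;> rcases j with b | b <;>
        simp only [Matrix.reindex_apply, Matrix.submatrix_apply, Mmat, Matrix.of_apply,
          Matrix.fromBlocks_apply₁₁, Matrix.fromBlocks_apply₁₂,
          Matrix.fromBlocks_apply₂₁, Matrix.fromBlocks_apply₂₂, Fin.lt_def, hl, hr]
      · fin_cases a <;> fin_cases b <;> simp [Smat]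
      · have : (a:ℕ) < 2 := a.isLt
        rw [if_neg (by omega), if_pos (by omega)]; rfl
      · rw [if_pos (by have : (b:ℕ) < 2 := b.isLt; omega)]; rfl
      · rcases Nat.lt_trichotomy (a:ℕ) (b:ℕ) with h | h | h
        · rw [if_neg (by omega), if_pos (by omega), if_neg (by omega), if_pos (by omega)]
        · rw [if_neg (by omega), if_neg (by omega), if_neg (by omega), if_neg (by omega)]
        · rw [if_pos (by omega), if_pos (by omega)]
    -- the target in block form
    have hB : Matrix.reindex e e (blockS (n+2) (fun _ => 1)) =
        fromBlocks Smat 0 0 (blockS n (fun _ => 1)) := by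
      ext i j
      rcases i with a | a <;> rcases j with b | b <;>
        simp only [Matrix.reindex_apply, Matrix.submatrix_apply, blockS, Matrix.of_apply,
          Matrix.fromBlocks_apply₁₁, Matrix.fromBlocks_apply₁₂,
          Matrix.fromBlocks_apply₂₁, Matrix.fromBlocks_apply₂₂, hl, hr]
      · fin_cases a <;> fin_cases b <;> simp [Smat]
      · have ha : (a:ℕ) < 2 := a.isLt
        rw [if_neg (by omega), if_neg (by omega)]; rfl
      · have hb : (b:ℕ) < 2 := b.isLt
        rw [if_neg (by omega), if_neg (by omega)]; rfl
      · by_cases h1 : (a:ℕ) % 2 = 0 ∧ (b:ℕ) = (a:ℕ) + 1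
        · rw [if_pos (by omega), if_pos h1]
        · rw [if_neg (by omega)]
          by_cases h2 : (b:ℕ) % 2 = 0 ∧ (a:ℕ) = (b:ℕ) + 1
          · rw [if_pos (by omega), if_neg h1, if_pos h2]
          · rw [if_neg (by omega), if_neg h1, if_neg h2]
    -- the congruence matrix in block form
    set F : Matrix (Fin 2 ⊕ Fin n) (Fin 2 ⊕ Fin n) ℤ := fromBlocks 1 0 (Emat n) 1 with hF
    set G : Matrix (Fin 2 ⊕ Fin n) (Fin 2 ⊕ Fin n) ℤ := fromBlocks 1 0 0 W' with hG
    have hFM : F * fromBlocks Smat (Bmat n) (CmatX n) (Mmat n) * Fᵀ =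
        fromBlocks Smat 0 0 (Mmat n) := by
      rw [hF, Matrix.fromBlocks_transpose, Matrix.fromBlocks_multiply,
        Matrix.fromBlocks_multiply]
      simp only [Matrix.transpose_one, Matrix.transpose_zero, Matrix.one_mul,
        Matrix.mul_one, Matrix.zero_mul, Matrix.mul_zero, add_zero, zero_add]
      rw [hES, hEB, hSE]
      simp
    -- assemble
    have hGF : (G * F) * fromBlocks Smat (Bmat n) (CmatX n) (Mmat n) * (G * F)ᵀ =
        fromBlocks Smat 0 0 (blockS n (fun _ => 1)) := by
      have h : (G * F) * fromBlocks Smat (Bmat n) (CmatX n) (Mmat n) * (G * F)ᵀ =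
          G * (F * fromBlocks Smat (Bmat n) (CmatX n) (Mmat n) * Fᵀ) * Gᵀ := by
        rw [Matrix.transpose_mul]
        simp only [Matrix.mul_assoc]
      rw [h, hFM, hG, Matrix.fromBlocks_transpose, Matrix.fromBlocks_multiply,
        Matrix.fromBlocks_multiply]
      simp only [Matrix.transpose_one, Matrix.transpose_zero, Matrix.one_mul,
        Matrix.mul_one, Matrix.zero_mul, Matrix.mul_zero, add_zero, zero_add]
      rw [hW]
    refine ⟨Matrix.reindex e.symm e.symm (G * F), ?_, ?_⟩
    · rw [Matrix.reindex_apply, Matrix.det_submatrix_equiv_self, Matrix.det_mul,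
        hG, hF, Matrix.det_fromBlocks_zero₂₁, Matrix.det_fromBlocks_zero₁₂]
      simp [hdet]
    · have hM' : Mmat (n+2) =
          Matrix.reindex e.symm e.symm (fromBlocks Smat (Bmat n) (CmatX n) (Mmat n)) := by
        rw [← hM]; simp
      have hB' : blockS (n+2) (fun _ => 1) =
          Matrix.reindex e.symm e.symm (fromBlocks Smat 0 0 (blockS n (fun _ => 1))) := by
        rw [← hB]; simp
      rw [hM', hB', ← hGF]
      simp only [Matrix.reindex_apply, Equiv.symm_symm, Matrix.transpose_submatrix,
        Matrix.submatrix_mul_equiv]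

/-- `M_x` is `SL(x,ℤ)`-congruent to the block diagonal matrix with `⌊x/2⌋` blocks `S(1)`
(for odd `x`, followed by a `1×1` zero block). -/
theorem Mmat_canonical_form (x : ℕ) (hx : 1 ≤ x) :
    (Even x → ∃ W : Matrix (Fin x) (Fin x) ℤ, W.det = 1 ∧
        W * Mmat x * W.transpose = blockS x (fun _ => 1)) ∧
    (Odd x → ∃ W : Matrix (Fin x) (Fin x) ℤ, W.det = 1 ∧
        W * Mmat x * W.transpose = blockS x (fun _ => 1)) :=
  ⟨fun _ => key x, fun _ => key x⟩
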